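/- The subgraph of a DAG induced by its covered edges is a forest of directed trees (i.e., it is acyclic and every vertex has in-degree at most one in this subgraph). -/

import Mathlib

/-- An arc `u → v` of the digraph `E` is a *covered edge* if
`Pa(u) \ {v} = Pa(v) \ {u}`, where `Pa(x) = {w | E w x}`. -/
def Covered {V : Type*} (E : V → V → Prop) (u v : V) : Prop :=
  E u v ∧ ({x | E x u} \ {v} : Set V) = ({x | E x v} \ {u} : Set V)

/-- The subgraph of a DAG induced by its covered edges is a forest of directed
trees: it is acyclic and every vertex has in-degree at most one in it. -/
theorem stmt_1 {V : Type*} (E : V → V → Prop)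
    (hacyc : ∀ v, ¬ Relation.TransGen E v v) :
    (∀ v, ¬ Relation.TransGen (Covered E) v v) ∧
      (∀ w u v : V, Covered E u w → Covered E v w → u = v) := by
  constructor
  · intro v hv
    exact hacyc v (Relation.TransGen.mono (fun a b h => h.1) v v hv)
  · intro w u v huw hvw
    by_contra hne
    have huw' := huw.1
    have hvw' := hvw.1
    have huneqw : u ≠ w := fun h => hacyc w (Relation.TransGen.single (h ▸ huw'))
    have hvneqw : v ≠ w := fun h => hacyc w (Relation.TransGen.single (h ▸ hvw'))
    -- v ∈ Pa(w)\{u} = Pa(u)\{w}, so E v u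
    have hvu : E v u := by
      have : v ∈ ({x | E x w} \ {u} : Set V) := ⟨hvw', fun h => hne (h.symm)⟩
      rw [← huw.2] at this
      exact this.1
    have huv : E u v := by
      have : u ∈ ({x | E x w} \ {v} : Set V) := ⟨huw', fun h => hne h⟩
      rw [← hvw.2] at this
      exact this.1
    exact hacyc u ((Relation.TransGen.single huv).tail hvu)
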